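/- arXiv:0812.0560 — 2 statements merged into one kernel-verified Lean document; each statement's English description precedes it below -/
import Mathlib

section
/- For every positive integer r, let m = Σ_{i=0}^{r} 2^{3i} and n = Σ_{i=0}^{r−1} 2^{3(i+1)}. Then m − n = 1, so d₂(m,n) = 1, while d₃(f(m), f(n)) = ℓ₃(1 + Σ_{i=2}^{2r+1} (−1)ⁱ3ⁱ) = 2r + 1, where f is the canonical length-preserving bijection between (ℤ, d₂) and (ℤ, d₃). Consequently sup{d₃(f(m),f(n))/d₂(m,n) : m ≠ n} = ∞ and f is not bi-Lipschitz. -/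
def Ag (g : ℤ) : Set ℤ := {0} ∪ {x | ∃ i : ℕ, x = g ^ i ∨ x = -g ^ i}
noncomputable def lg (g : ℤ) (n : ℤ) : ℕ :=
  sInf {h | ∃ l : List ℤ, (∀ a ∈ l, a ∈ Ag g) ∧ l.sum = n ∧ l.length = h}
def bdig (n : ℤ) : ℤ := if n % 3 = 0 then 0 else if n % 3 = 1 then 1 else -1
lemma bdig_cases (n : ℤ) : bdig n = 0 ∨ bdig n = 1 ∨ bdig n = -1 := by
  unfold bdig; split_ifs <;> simp
lemma bdig_dvd (n : ℤ) : n - bdig n = 3 * ((n - bdig n) / 3) := by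
  unfold bdig; split_ifs <;> omega
lemma natAbs_q_lt (n : ℤ) (hn : n ≠ 0) : ((n - bdig n) / 3).natAbs < n.natAbs := by
  have h1 := bdig_dvd n; have h2 := bdig_cases n; omega
def w (n : ℤ) : ℕ :=
  if _h : n = 0 then 0 else (bdig n).natAbs + w ((n - bdig n) / 3)
termination_by n.natAbs
decreasing_by exact natAbs_q_lt n _h
lemma w_zero : w 0 = 0 := by simp [w]
lemma bdig_of (q δ : ℤ) (hδ : δ = 0 ∨ δ = 1 ∨ δ = -1) : bdig (3 * q + δ) = δ := by
  unfold bdig; split_ifs <;> omega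
lemma w_digit (q δ : ℤ) (hδ : δ = 0 ∨ δ = 1 ∨ δ = -1) :
    w (3 * q + δ) = δ.natAbs + w q := by
  by_cases h0 : 3 * q + δ = 0
  · have hq : q = 0 ∧ δ = 0 := by omega
    rw [hq.1, hq.2]; simp [w_zero]
  · rw [w, dif_neg h0, bdig_of q δ hδ]
    congr 1
    have : 3 * q + δ - δ = 3 * q := by ring
    rw [this, Int.mul_ediv_cancel_left _ (by norm_num)]

lemma w_pm_one_aux : ∀ N : ℕ, ∀ n : ℤ, n.natAbs ≤ N →
    w (n + 1) ≤ w n + 1 ∧ w (n - 1) ≤ w n + 1 := by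
  intro N
  induction N with
  | zero =>
    intro n hn
    have h : n = 0 := by omega
    subst h
    have e1 : (0:ℤ) + 1 = 3 * 0 + 1 := by ring
    have e2 : (0:ℤ) - 1 = 3 * 0 + (-1) := by ring
    rw [e1, e2, w_digit 0 1 (by tauto), w_digit 0 (-1) (by tauto)]
    simp [w_zero]
  | succ N ih =>
    intro n hn
    by_cases hsm : n.natAbs ≤ N
    · exact ih n hsm
    have hn0 : n ≠ 0 := by omega
    have h1 := bdig_dvd n
    have h2 := bdig_cases n
    set q := (n - bdig n) / 3 with hqdef
    have hq : q.natAbs ≤ N := by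
      have := natAbs_q_lt n hn0; omega
    rcases h2 with h | h | h
    · -- n = 3q
      have hn' : n = 3 * q + 0 := by omega
      have e1 : n + 1 = 3 * q + 1 := by omega
      have e2 : n - 1 = 3 * q + (-1) := by omega
      rw [e1, e2, hn', w_digit q 0 (by tauto), w_digit q 1 (by tauto),
        w_digit q (-1) (by tauto)]
      simp only [Int.natAbs_one, Int.natAbs_zero, Int.natAbs_neg]; omega
    · -- n = 3q + 1
      have hn' : n = 3 * q + 1 := by omega
      have e1 : n + 1 = 3 * (q + 1) + (-1) := by omega
      have e2 : n - 1 = 3 * q + 0 := by omega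
      rw [e1, e2, hn', w_digit q 1 (by tauto), w_digit (q+1) (-1) (by tauto),
        w_digit q 0 (by tauto)]
      have := (ih q hq).1
      simp at this ⊢
      omega
    · -- n = 3q - 1
      have hn' : n = 3 * q + (-1) := by omega
      have e1 : n + 1 = 3 * q + 0 := by omega
      have e2 : n - 1 = 3 * (q - 1) + 1 := by omega
      rw [e1, e2, hn', w_digit q (-1) (by tauto), w_digit q 0 (by tauto),
        w_digit (q-1) 1 (by tauto)]
      have := (ih q hq).2
      have e3 : q - 1 = q - 1 := rfl
      simp at this ⊢
      constructor
      · omega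
      · have : w (q - 1) ≤ w q + 1 := (ih q hq).2
        omega

lemma w_pm_pow : ∀ k : ℕ, ∀ n : ℤ,
    w (n + 3 ^ k) ≤ w n + 1 ∧ w (n - 3 ^ k) ≤ w n + 1 := by
  intro k
  induction k with
  | zero => intro n; simpa using w_pm_one_aux n.natAbs n le_rfl
  | succ k ih =>
    intro n
    have h1 := bdig_dvd n
    have h2 := bdig_cases n
    set q := (n - bdig n) / 3 with hqdef
    set δ := bdig n with hδdef
    have hn' : n = 3 * q + δ := by omega
    have e1 : n + 3 ^ (k+1) = 3 * (q + 3 ^ k) + δ := by rw [hn']; ring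
    have e2 : n - 3 ^ (k+1) = 3 * (q - 3 ^ k) + δ := by rw [hn']; ring
    rw [e1, e2, hn', w_digit q δ h2, w_digit (q + 3^k) δ h2, w_digit (q - 3^k) δ h2]
    have := ih q
    omega

lemma mem_Ag3 (a : ℤ) (h : a ∈ Ag 3) : a = 0 ∨ ∃ i : ℕ, a = 3 ^ i ∨ a = -3 ^ i := by
  simpa [Ag] using h

lemma w_le_length : ∀ l : List ℤ, (∀ a ∈ l, a ∈ Ag 3) → w l.sum ≤ l.length := by
  intro l
  induction l with
  | nil => intro _; simp [w_zero]
  | cons a t ih =>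
    intro h
    have ht := ih (fun x hx => h x (List.mem_cons_of_mem a hx))
    rcases mem_Ag3 a (h a List.mem_cons_self) with h0 | ⟨i, hi | hi⟩
    · simp [h0]; omega
    · have : (a :: t).sum = t.sum + 3 ^ i := by simp [hi]; ring
      rw [this]; have := (w_pm_pow i t.sum).1; simp; omega
    · have : (a :: t).sum = t.sum - 3 ^ i := by simp [hi]; ring
      rw [this]; have := (w_pm_pow i t.sum).2; simp; omega

lemma mul3_mem_Ag3 (a : ℤ) (h : a ∈ Ag 3) : 3 * a ∈ Ag 3 := by
  rcases mem_Ag3 a h with h0 | ⟨i, hi | hi⟩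
  · subst h0; exact Set.mem_union_left _ (by simp)
  · subst hi; exact Set.mem_union_right _ ⟨i + 1, Or.inl (by ring)⟩
  · subst hi; exact Set.mem_union_right _ ⟨i + 1, Or.inr (by ring)⟩

lemma one_mem_Ag3 : (1 : ℤ) ∈ Ag 3 :=
  Set.mem_union_right _ ⟨0, Or.inl (by norm_num)⟩

lemma neg_one_mem_Ag3 : (-1 : ℤ) ∈ Ag 3 :=
  Set.mem_union_right _ ⟨0, Or.inr (by norm_num)⟩

lemma sum_map_mul3 (l : List ℤ) : (l.map (fun x => 3 * x)).sum = 3 * l.sum := by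
  induction l with
  | nil => simp
  | cons a t ih => simp [ih]; ring

lemma exists_list_w : ∀ N : ℕ, ∀ n : ℤ, n.natAbs ≤ N →
    ∃ l : List ℤ, (∀ a ∈ l, a ∈ Ag 3) ∧ l.sum = n ∧ l.length = w n := by
  intro N
  induction N with
  | zero =>
    intro n hn
    have : n = 0 := by omega
    subst this
    exact ⟨[], by simp, by simp, by simp [w_zero]⟩
  | succ N ih =>
    intro n hn
    by_cases hsm : n.natAbs ≤ N
    · exact ih n hsm
    have hn0 : n ≠ 0 := by omega
    have h1 := bdig_dvd n
    have h2 := bdig_cases n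
    set q := (n - bdig n) / 3 with hqdef
    set δ := bdig n with hδdef
    have hq : q.natAbs ≤ N := by have := natAbs_q_lt n hn0; omega
    obtain ⟨l, hl, hsum, hlen⟩ := ih q hq
    have hn' : n = 3 * q + δ := by omega
    have hwn : w n = δ.natAbs + w q := by rw [hn', w_digit q δ h2]
    rcases h2 with h | h | h
    · refine ⟨l.map (fun x => 3 * x), ?_, ?_, ?_⟩
      · intro a ha
        obtain ⟨b, hb, rfl⟩ := List.mem_map.1 ha
        exact mul3_mem_Ag3 b (hl b hb)
      · rw [sum_map_mul3, hsum, hn', h]; ring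
      · simp [hwn, h, hlen]
    · refine ⟨1 :: l.map (fun x => 3 * x), ?_, ?_, ?_⟩
      · intro a ha
        rcases List.mem_cons.1 ha with rfl | ha
        · exact one_mem_Ag3
        · obtain ⟨b, hb, rfl⟩ := List.mem_map.1 ha
          exact mul3_mem_Ag3 b (hl b hb)
      · rw [List.sum_cons, sum_map_mul3, hsum, hn', h]; ring
      · simp [hwn, h, hlen]; omega
    · refine ⟨(-1) :: l.map (fun x => 3 * x), ?_, ?_, ?_⟩
      · intro a ha
        rcases List.mem_cons.1 ha with rfl | ha
        · exact neg_one_mem_Ag3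
        · obtain ⟨b, hb, rfl⟩ := List.mem_map.1 ha
          exact mul3_mem_Ag3 b (hl b hb)
      · rw [List.sum_cons, sum_map_mul3, hsum, hn', h]; ring
      · simp [hwn, h, hlen]; omega

lemma lg3_eq_w (n : ℤ) : lg 3 n = w n := by
  obtain ⟨l, hl, hsum, hlen⟩ := exists_list_w n.natAbs n le_rfl
  have hmem : w n ∈ {h | ∃ l : List ℤ, (∀ a ∈ l, a ∈ Ag 3) ∧ l.sum = n ∧ l.length = h} :=
    ⟨l, hl, hsum, hlen⟩
  apply le_antisymm
  · exact Nat.sInf_le hmem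
  · obtain ⟨l', hl', hsum', hlen'⟩ := Nat.sInf_mem ⟨w n, hmem⟩
    calc w n = w l'.sum := by rw [hsum']
    _ ≤ l'.length := w_le_length l' hl'
    _ = _ := hlen'

lemma lg2_one : lg 2 1 = 1 := by
  have hmem : 1 ∈ {h | ∃ l : List ℤ, (∀ a ∈ l, a ∈ Ag 2) ∧ l.sum = 1 ∧ l.length = h} := by
    refine ⟨[1], ?_, by simp, by simp⟩
    intro a ha
    simp at ha
    subst ha
    exact Set.mem_union_right _ ⟨0, Or.inl (by norm_num)⟩
  unfold lg
  apply le_antisymm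
  · exact Nat.sInf_le hmem
  · obtain ⟨l', hl', hsum', hlen'⟩ := Nat.sInf_mem ⟨1, hmem⟩
    by_contra hlt
    have h0 : l'.length = 0 := by omega
    have : l' = [] := List.length_eq_zero_iff.1 h0
    subst this
    simp at hsum'

def valL : List ℤ → ℤ
  | [] => 0
  | δ :: d => δ + 3 * valL d

def wtL : List ℤ → ℕ
  | [] => 0
  | δ :: d => δ.natAbs + wtL d

lemma w_valL : ∀ d : List ℤ, (∀ δ ∈ d, δ = 0 ∨ δ = 1 ∨ δ = -1) → w (valL d) = wtL d := by
  intro d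
  induction d with
  | nil => intro _; simp [valL, wtL, w_zero]
  | cons δ t ih =>
    intro h
    have e : valL (δ :: t) = 3 * valL t + δ := by simp [valL]; ring
    rw [e, w_digit _ _ (h δ List.mem_cons_self), wtL,
      ih (fun x hx => h x (List.mem_cons_of_mem δ hx))]

def altL : ℕ → List ℤ
  | 0 => []
  | m + 1 => 1 :: (altL m).map (fun x => -x)

lemma valL_map_neg (l : List ℤ) : valL (l.map (fun x => -x)) = -valL l := by
  induction l with
  | nil => simp [valL]
  | cons a t ih => simp [valL, ih]; ring

lemma wtL_map_neg (l : List ℤ) : wtL (l.map (fun x => -x)) = wtL l := by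
  induction l with
  | nil => simp [wtL]
  | cons a t ih => simp [wtL, ih]

lemma altL_mem : ∀ m : ℕ, ∀ δ ∈ altL m, δ = 0 ∨ δ = 1 ∨ δ = -1 := by
  intro m
  induction m with
  | zero => simp [altL]
  | succ m ih =>
    intro δ hδ
    rcases List.mem_cons.1 hδ with rfl | hδ
    · tauto
    · obtain ⟨b, hb, rfl⟩ := List.mem_map.1 hδ
      rcases ih b hb with h | h | h <;> simp [h]

lemma altL_wt : ∀ m : ℕ, wtL (altL m) = m := by
  intro m
  induction m with
  | zero => simp [altL, wtL]
  | succ m ih => simp [altL, wtL, wtL_map_neg, ih]; omega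

lemma altL_val : ∀ m : ℕ, 4 * valL (altL m) = 1 - (-3) ^ m := by
  intro m
  induction m with
  | zero => simp [altL, valL]
  | succ m ih =>
    have : valL (altL (m+1)) = 1 - 3 * valL (altL m) := by
      simp [altL, valL, valL_map_neg]; ring
    rw [this, pow_succ]
    linarith

lemma icc_sum (r : ℕ) :
    4 * (1 + ∑ i ∈ Finset.Icc 2 (2 * r + 1), (-1 : ℤ) ^ i * 3 ^ i) = 13 - 9 ^ (r + 1) := by
  induction r with
  | zero => norm_num
  | succ r ih =>
    have e1 : 2 * (r + 1) + 1 = (2 * r + 2) + 1 := by ring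
    rw [e1, Finset.sum_Icc_succ_top (by omega), Finset.sum_Icc_succ_top (by omega)]
    have p1 : ((-1 : ℤ)) ^ (2 * r + 2) * 3 ^ (2 * r + 2) = 9 ^ (r + 1) := by
      have : (2 * r + 2) = 2 * (r + 1) := by ring
      rw [this, pow_mul, pow_mul, ← mul_pow]
      norm_num
    have p2 : ((-1 : ℤ)) ^ (2 * r + 2 + 1) * 3 ^ (2 * r + 2 + 1) = -3 * 9 ^ (r + 1) := by
      calc ((-1 : ℤ)) ^ (2 * r + 2 + 1) * 3 ^ (2 * r + 2 + 1)
          = ((-1 : ℤ)) ^ (2 * r + 2) * 3 ^ (2 * r + 2) * (-3) := by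
            rw [pow_succ, pow_succ]; ring
        _ = -3 * 9 ^ (r + 1) := by rw [p1]; ring
    rw [p1, p2]
    have p3 : (9 : ℤ) ^ (r + 1 + 1) = 9 * 9 ^ (r + 1) := by rw [pow_succ]; ring
    rw [p3]
    linarith

lemma big_w (r : ℕ) :
    w (1 + ∑ i ∈ Finset.Icc 2 (2 * r + 1), (-1 : ℤ) ^ i * 3 ^ i) = 2 * r + 1 := by
  have hval : 1 + ∑ i ∈ Finset.Icc 2 (2 * r + 1), (-1 : ℤ) ^ i * 3 ^ i
      = valL (1 :: 0 :: altL (2 * r)) := by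
    have h4 : (4 : ℤ) * valL (1 :: 0 :: altL (2 * r)) = 13 - 9 ^ (r + 1) := by
      have := altL_val (2 * r)
      have e : ((-3 : ℤ)) ^ (2 * r) = 9 ^ r := by
        rw [pow_mul]; norm_num
      rw [e] at this
      simp only [valL]
      have p3 : (9 : ℤ) ^ (r + 1) = 9 * 9 ^ r := by rw [pow_succ]; ring
      rw [p3]
      linarith
    have := icc_sum r
    have h4' := h4
    apply mul_left_cancel₀ (show (4:ℤ) ≠ 0 by norm_num)
    rw [this, h4]
  rw [hval, w_valL]
  · simp [wtL, altL_wt]; omega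
  · intro δ hδ
    rcases List.mem_cons.1 hδ with rfl | hδ
    · tauto
    rcases List.mem_cons.1 hδ with rfl | hδ
    · tauto
    exact altL_mem _ δ hδ

lemma geo1 (n : ℕ) : 8 * (∑ i ∈ Finset.range n, (3 : ℤ) ^ (2 * i)) = 9 ^ n - 1 := by
  induction n with
  | zero => simp
  | succ n ih =>
    rw [Finset.sum_range_succ, mul_add, ih, pow_mul]
    have : (9 : ℤ) ^ (n + 1) = 9 * 9 ^ n := by rw [pow_succ]; ring
    rw [this]
    norm_num
    linarith

lemma geo2 (n : ℕ) : 8 * (∑ i ∈ Finset.range n, (3 : ℤ) ^ (2 * i + 3)) = 27 * (9 ^ n - 1) := by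
  induction n with
  | zero => simp
  | succ n ih =>
    rw [Finset.sum_range_succ, mul_add, ih]
    have e : (3 : ℤ) ^ (2 * n + 3) = 27 * 9 ^ n := by
      rw [pow_add, pow_mul]; norm_num; ring
    have : (9 : ℤ) ^ (n + 1) = 9 * 9 ^ n := by rw [pow_succ]; ring
    rw [e, this]
    ring

lemma key4 (r : ℕ) :
    (∑ i ∈ Finset.range (r + 1), (3 : ℤ) ^ (2 * i)) -
      (∑ i ∈ Finset.range r, (3 : ℤ) ^ (2 * i + 3)) =
    1 + ∑ i ∈ Finset.Icc 2 (2 * r + 1), (-1 : ℤ) ^ i * 3 ^ i := by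
  apply mul_left_cancel₀ (show (8 : ℤ) ≠ 0 by norm_num)
  rw [mul_sub, geo1, geo2]
  have h := icc_sum r
  have e2 : (9 : ℤ) ^ (r + 1) = 9 * 9 ^ r := by rw [pow_succ]; ring
  linarith

lemma f_diff (f : ℤ → ℤ)
    (hf : ∀ (m : ℕ) (k : Fin m → ℕ) (ε : Fin m → ℤ),
      (∀ i j : Fin m, (i : ℕ) < j → k i + 2 ≤ k j) →
      (∀ i, ε i = 1 ∨ ε i = -1) →
      f (∑ i, ε i * 2 ^ k i) = ∑ i, ε i * 3 ^ (k i - (i : ℕ))) (r : ℕ) :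
    f (∑ i ∈ Finset.range (r + 1), (2 : ℤ) ^ (3 * i)) -
      f (∑ i ∈ Finset.range r, (2 : ℤ) ^ (3 * (i + 1))) =
    1 + ∑ i ∈ Finset.Icc 2 (2 * r + 1), (-1 : ℤ) ^ i * 3 ^ i := by
  have h1 := hf (r + 1) (fun i => 3 * (i : ℕ)) (fun _ => 1)
    (fun i j hij => by show 3 * (i : ℕ) + 2 ≤ 3 * (j : ℕ); omega) (fun _ => Or.inl rfl)
  have h2 := hf r (fun i => 3 * ((i : ℕ) + 1)) (fun _ => 1)
    (fun i j hij => by show 3 * ((i : ℕ) + 1) + 2 ≤ 3 * ((j : ℕ) + 1); omega)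
    (fun _ => Or.inl rfl)
  simp only [one_mul] at h1 h2
  rw [Fin.sum_univ_eq_sum_range (fun i => (2 : ℤ) ^ (3 * i)) (r + 1),
    Fin.sum_univ_eq_sum_range (fun i => (3 : ℤ) ^ (3 * i - i)) (r + 1)] at h1
  rw [Fin.sum_univ_eq_sum_range (fun i => (2 : ℤ) ^ (3 * (i + 1))) r,
    Fin.sum_univ_eq_sum_range (fun i => (3 : ℤ) ^ (3 * (i + 1) - i)) r] at h2
  have e1 : ∑ i ∈ Finset.range (r + 1), (3 : ℤ) ^ (3 * i - i)
      = ∑ i ∈ Finset.range (r + 1), (3 : ℤ) ^ (2 * i) := by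
    apply Finset.sum_congr rfl
    intro i _
    congr 1
    omega
  have e2 : ∑ i ∈ Finset.range r, (3 : ℤ) ^ (3 * (i + 1) - i)
      = ∑ i ∈ Finset.range r, (3 : ℤ) ^ (2 * i + 3) := by
    apply Finset.sum_congr rfl
    intro i _
    congr 1
    omega
  rw [h1, h2, e1, e2, key4]

theorem stmt16 (f : ℤ → ℤ)
    (hf : ∀ (m : ℕ) (k : Fin m → ℕ) (ε : Fin m → ℤ),
      (∀ i j : Fin m, (i : ℕ) < j → k i + 2 ≤ k j) →
      (∀ i, ε i = 1 ∨ ε i = -1) →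
      f (∑ i, ε i * 2 ^ k i) = ∑ i, ε i * 3 ^ (k i - (i : ℕ))) :
    (∀ r : ℕ, 0 < r →
      (∑ i ∈ Finset.range (r + 1), (2 : ℤ) ^ (3 * i)) -
          (∑ i ∈ Finset.range r, (2 : ℤ) ^ (3 * (i + 1))) = 1 ∧
      lg 2 ((∑ i ∈ Finset.range (r + 1), (2 : ℤ) ^ (3 * i)) -
          ∑ i ∈ Finset.range r, (2 : ℤ) ^ (3 * (i + 1))) = 1 ∧
      lg 3 (1 + ∑ i ∈ Finset.Icc 2 (2 * r + 1), (-1 : ℤ) ^ i * 3 ^ i) = 2 * r + 1 ∧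
      lg 3 (f (∑ i ∈ Finset.range (r + 1), (2 : ℤ) ^ (3 * i)) -
          f (∑ i ∈ Finset.range r, (2 : ℤ) ^ (3 * (i + 1)))) = 2 * r + 1) ∧
    (∀ L : ℕ, ∃ m n : ℤ, m ≠ n ∧ L * lg 2 (m - n) < lg 3 (f m - f n)) := by
  have main : ∀ r : ℕ,
      (∑ i ∈ Finset.range (r + 1), (2 : ℤ) ^ (3 * i)) -
          (∑ i ∈ Finset.range r, (2 : ℤ) ^ (3 * (i + 1))) = 1 ∧
      lg 2 ((∑ i ∈ Finset.range (r + 1), (2 : ℤ) ^ (3 * i)) -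
          ∑ i ∈ Finset.range r, (2 : ℤ) ^ (3 * (i + 1))) = 1 ∧
      lg 3 (1 + ∑ i ∈ Finset.Icc 2 (2 * r + 1), (-1 : ℤ) ^ i * 3 ^ i) = 2 * r + 1 ∧
      lg 3 (f (∑ i ∈ Finset.range (r + 1), (2 : ℤ) ^ (3 * i)) -
          f (∑ i ∈ Finset.range r, (2 : ℤ) ^ (3 * (i + 1)))) = 2 * r + 1 := by
    intro r
    have part1 : (∑ i ∈ Finset.range (r + 1), (2 : ℤ) ^ (3 * i)) -
        (∑ i ∈ Finset.range r, (2 : ℤ) ^ (3 * (i + 1))) = 1 := by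
      rw [Finset.sum_range_succ']
      norm_num
    refine ⟨part1, ?_, ?_, ?_⟩
    · rw [part1, lg2_one]
    · rw [lg3_eq_w]; exact big_w r
    · rw [f_diff f hf r, lg3_eq_w]; exact big_w r
  refine ⟨fun r _ => main r, fun L => ?_⟩
  obtain ⟨p1, p2, _, p4⟩ := main (L + 1)
  refine ⟨∑ i ∈ Finset.range (L + 1 + 1), (2 : ℤ) ^ (3 * i),
    ∑ i ∈ Finset.range (L + 1), (2 : ℤ) ^ (3 * (i + 1)), ?_, ?_⟩
  · intro h
    rw [h] at p1
    simp at p1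
  · rw [p2, p4]
    omega
end

section
/- Let W be a nonempty finite set of integers. Then every complement to W in the additive group ℤ contains a minimal complement to W; here C ⊆ ℤ is a complement to W if W + C = ℤ, and C is minimal if no proper subset of C is a complement to W. -/
open Pointwise

theorem stmt17 (W : Set ℤ) (hW : W.Finite) (hWne : W.Nonempty)
    (C : Set ℤ) (hC : W + C = Set.univ) :
    ∃ M ⊆ C, W + M = Set.univ ∧ ∀ M' : Set ℤ, M' ⊂ M → W + M' ≠ Set.univ := by
  set S : Set (Set ℤ) := {D | D ⊆ C ∧ W + D = Set.univ} with hS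
  have key : ∀ c ⊆ S, IsChain (· ⊆ ·) c → c.Nonempty →
      ∃ lb ∈ S, ∀ s ∈ c, lb ⊆ s := by
    intro c hcS hchain hcne
    refine ⟨⋂₀ c, ⟨?_, ?_⟩, fun s hs => Set.sInter_subset_of_mem hs⟩
    · obtain ⟨D, hD⟩ := hcne
      exact (Set.sInter_subset_of_mem hD).trans (hcS hD).1
    · ext n
      simp only [Set.mem_univ, iff_true]
      set F : Set ℤ → Set ℤ := fun D => {w ∈ W | n - w ∈ D} with hF
      have hFne : ∀ D ∈ c, (F D).Nonempty := by
        intro D hD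
        have h2 := (hcS hD).2
        have hn : n ∈ W + D := h2 ▸ Set.mem_univ n
        obtain ⟨w, hw, d, hd, hwd⟩ := Set.mem_add.mp hn
        exact ⟨w, hw, by rw [← hwd]; simpa⟩
      have hT : (F '' c).Finite := by
        refine Set.Finite.subset hW.finite_subsets ?_
        rintro _ ⟨D, hD, rfl⟩
        exact Set.sep_subset _ _
      obtain ⟨D0, hD0⟩ := hcne
      have hTne : (F '' c).Nonempty := ⟨F D0, D0, hD0, rfl⟩
      obtain ⟨t, ⟨D1, hD1, rfl⟩, hmin⟩ := (show ∃ a ∈ F '' c, ∀ a' ∈ F '' c, id a' ≤ id a → id a = id a' from by obtain ⟨a, ha, h⟩ := Set.Finite.exists_minimalFor id _ hT hTne; exact ⟨a, ha, fun a' ha' h' => le_antisymm (h ha' h') h'⟩)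
      have hleast : ∀ D ∈ c, F D1 ⊆ F D := by
        intro D hD
        rcases hchain.total hD1 hD with h | h
        · exact fun w hw => ⟨hw.1, h hw.2⟩
        · have hsub : F D ⊆ F D1 := fun w hw => ⟨hw.1, h hw.2⟩
          have := hmin (F D) ⟨D, hD, rfl⟩ hsub
          simp only [id] at this
          rw [this]
      obtain ⟨w, hwW, hwD⟩ := hFne D1 hD1
      refine Set.mem_add.mpr ⟨w, hwW, n - w, ?_, by ring⟩
      exact Set.mem_sInter.mpr fun D hD => (hleast D hD ⟨hwW, hwD⟩).2
  obtain ⟨M, hMC, hmin⟩ := zorn_superset_nonempty S key C ⟨Set.Subset.rfl, hC⟩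
  refine ⟨M, hmin.prop.1, hmin.prop.2, fun M' hM' hM'C => ?_⟩
  exact hM'.2 (hmin.2 ⟨hM'.1.trans hmin.prop.1, hM'C⟩ hM'.1)
end
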